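/- arXiv:2307.05701 — 7 statements merged into one kernel-verified Lean document; each statement's English description precedes it below -/
import Mathlib

section
/- A graph G with m edges has an independent set of size k if and only if the 2-subdivision of G (obtained by replacing each edge uv with a path u–w_{uv}–w_{vu}–v of length 3) has an independent set of size k + m. -/
/-- The 2-subdivision of a graph `G`: every edge `uv` is replaced by the path
`u — w_{uv} — w_{vu} — v`, where the subdivision vertex `w_{uv}` is encoded as the
ordered pair `(u, v)` (with a proof that `uv` is an edge). -/
def twoSubdivision {V : Type*} (G : SimpleGraph V) :
    SimpleGraph (V ⊕ {p : V × V // G.Adj p.1 p.2}) where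
  Adj x y :=
    match x, y with
    | Sum.inl u, Sum.inl _ => False
    | Sum.inl u, Sum.inr w => u = w.1.1
    | Sum.inr w, Sum.inl u => u = w.1.1
    | Sum.inr w₁, Sum.inr w₂ => w₁.1.1 = w₂.1.2 ∧ w₁.1.2 = w₂.1.1
  symm := by
    refine ⟨?_⟩
    rintro (u | w) (v | w') h
    · exact h
    · exact h
    · exact h
    · exact ⟨h.2.symm, h.1.symm⟩
  loopless := by
    refine ⟨?_⟩
    rintro (u | w) h
    · exact h
    · have := w.2
      rw [h.1] at this
      exact G.loopless.irrefl _ this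

/-- Poljak: a graph `G` with `m` edges has an independent set of size `k`
iff its 2-subdivision has an independent set of size `k + m`. -/
theorem independent_set_two_subdivision {V : Type*} [Fintype V] [DecidableEq V]
    (G : SimpleGraph V) [DecidableRel G.Adj] (k m : ℕ) (hm : m = G.edgeFinset.card) :
    (∃ I : Finset V, (∀ u ∈ I, ∀ v ∈ I, ¬ G.Adj u v) ∧ I.card = k) ↔
    (∃ J : Finset (V ⊕ {p : V × V // G.Adj p.1 p.2}),
        (∀ x ∈ J, ∀ y ∈ J, ¬ (twoSubdivision G).Adj x y) ∧ J.card = k + m) := by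
  classical
  constructor
  · -- forward
    rintro ⟨I, hI, hIcard⟩
    letI : LinearOrder V := LinearOrder.lift' (Fintype.equivFin V) (Fintype.equivFin V).injective
    set chosen : {p : V × V // G.Adj p.1 p.2} → Prop :=
      fun w => w.1.1 ∉ I ∧ (w.1.2 ∈ I ∨ w.1.1 < w.1.2) with hchosen
    -- swapped pairs are not both chosen
    have hswap : ∀ (w₁ w₂ : {p : V × V // G.Adj p.1 p.2}), chosen w₁ → chosen w₂ →
        w₁.1.1 = w₂.1.2 → w₁.1.2 = w₂.1.1 → False := by
      rintro ⟨⟨u, v⟩, h⟩ ⟨⟨v', u'⟩, h'⟩ ⟨hu1, hc1⟩ ⟨hu2, hc2⟩ e1 e2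
      simp only at *
      subst e1; subst e2
      rcases hc1 with h1 | h1
      · exact hu2 h1
      · rcases hc2 with h2 | h2
        · exact hu1 h2
        · exact absurd h1 (not_lt_of_gt h2)
    set S : Finset {p : V × V // G.Adj p.1 p.2} := Finset.univ.filter chosen with hS
    refine ⟨I.image Sum.inl ∪ S.image Sum.inr, ?_, ?_⟩
    · intro x hx y hy hadj
      simp only [Finset.mem_union, Finset.mem_image] at hx hy
      rcases hx with ⟨u, hu, rfl⟩ | ⟨w, hw, rfl⟩ <;>
        rcases hy with ⟨u', hu', rfl⟩ | ⟨w', hw', rfl⟩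
      · exact hadj
      · simp only [hS, Finset.mem_filter] at hw'
        exact hw'.2.1 (hadj ▸ hu)
      · simp only [hS, Finset.mem_filter] at hw
        exact hw.2.1 (hadj ▸ hu')
      · simp only [hS, Finset.mem_filter] at hw hw'
        exact hswap w w' hw.2 hw'.2 hadj.1 hadj.2
    · have hdisj : Disjoint (I.image (Sum.inl : V → V ⊕ {p : V × V // G.Adj p.1 p.2}))
          (S.image Sum.inr) := by
        simp only [Finset.disjoint_left, Finset.mem_image]
        rintro x ⟨u, _, rfl⟩ ⟨w, _, h⟩
        exact Sum.inl_ne_inr h.symm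
      rw [Finset.card_union_of_disjoint hdisj,
        Finset.card_image_of_injective _ Sum.inl_injective,
        Finset.card_image_of_injective _ Sum.inr_injective, hIcard]
      congr 1
      -- S.card = m
      rw [hm]
      apply Finset.card_bij (fun w _ => Sym2.mk w.1.1 w.1.2)
      · rintro ⟨⟨u, v⟩, h⟩ _
        simpa [SimpleGraph.mem_edgeFinset] using h
      · rintro ⟨⟨u, v⟩, h⟩ hw ⟨⟨u', v'⟩, h'⟩ hw' heq
        simp only [hS, Finset.mem_filter] at hw hw'
        rcases Sym2.eq_iff.mp heq with ⟨rfl, rfl⟩ | ⟨rfl, rfl⟩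
        · rfl
        · exact (hswap _ _ hw.2 hw'.2 rfl rfl).elim
      · intro e he
        rw [SimpleGraph.mem_edgeFinset] at he
        induction e with
        | _ u v =>
          have hadj : G.Adj u v := he
          have hne : u ≠ v := hadj.ne
          by_cases hu : u ∈ I
          · have hv : v ∉ I := fun hv => hI u hu v hv hadj
            refine ⟨⟨(v, u), hadj.symm⟩, ?_, ?_⟩
            · simp [hS, hchosen, hv, hu]
            · exact Sym2.eq_swap
          · by_cases hv : v ∈ I
            · exact ⟨⟨(u, v), hadj⟩, by simp [hS, hchosen, hu, hv], rfl⟩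
            · rcases lt_or_gt_of_ne hne with hlt | hlt
              · exact ⟨⟨(u, v), hadj⟩, by simp [hS, hchosen, hu, hlt], rfl⟩
              · exact ⟨⟨(v, u), hadj.symm⟩, by simp [hS, hchosen, hv, hlt], Sym2.eq_swap⟩
  · -- backward
    rintro ⟨J, hJ, hJcard⟩
    set A : Finset V := Finset.univ.filter (fun v => Sum.inl v ∈ J) with hA
    set S : Finset {p : V × V // G.Adj p.1 p.2} :=
      Finset.univ.filter (fun w => Sum.inr w ∈ J) with hSdef
    -- J is the disjoint union of its inl and inr parts
    have hJeq : J = A.image Sum.inl ∪ S.image Sum.inr := by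
      ext x
      cases x with
      | inl u => simp [hA, hSdef]
      | inr w => simp [hA, hSdef]
    have hdisj : Disjoint (A.image (Sum.inl : V → V ⊕ {p : V × V // G.Adj p.1 p.2}))
        (S.image Sum.inr) := by
      simp only [Finset.disjoint_left, Finset.mem_image]
      rintro x ⟨u, _, rfl⟩ ⟨w, _, h⟩
      exact Sum.inl_ne_inr h.symm
    have hcards : A.card + S.card = k + m := by
      rw [← hJcard, hJeq, Finset.card_union_of_disjoint hdisj,
        Finset.card_image_of_injective _ Sum.inl_injective,
        Finset.card_image_of_injective _ Sum.inr_injective]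
    -- bad edges: both endpoints in A
    set EA : Finset (Sym2 V) := G.edgeFinset.filter (fun e => ∀ v ∈ e, v ∈ A) with hEA
    set t : ℕ := EA.card with ht
    -- S injects into the non-bad edges
    have hScard : S.card ≤ m - t := by
      have : S.card ≤ (G.edgeFinset \ EA).card := by
        apply Finset.card_le_card_of_injOn (fun w => Sym2.mk w.1.1 w.1.2)
        · rintro ⟨⟨u, v⟩, h⟩ hw
          simp only [Finset.mem_coe, hSdef, Finset.mem_filter, Finset.mem_univ, true_and] at hw
          simp only [Finset.mem_coe, Finset.mem_sdiff, SimpleGraph.mem_edgeFinset]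
          refine ⟨h, ?_⟩
          simp only [hEA, Finset.mem_filter, not_and]
          intro _ hall
          have hu : u ∈ A := hall u (by simp)
          simp only [hA, Finset.mem_filter, Finset.mem_univ, true_and] at hu
          exact hJ _ hu _ hw rfl
        · rintro ⟨⟨u, v⟩, h⟩ hw ⟨⟨u', v'⟩, h'⟩ hw' heq
          simp only [Finset.mem_coe, hSdef, Finset.mem_filter, Finset.mem_univ, true_and]
            at hw hw'
          rcases Sym2.eq_iff.mp heq with ⟨rfl, rfl⟩ | ⟨rfl, rfl⟩
          · rfl
          · exact absurd (⟨rfl, rfl⟩ : (twoSubdivision G).Adj (Sum.inr ⟨(u,v), h⟩)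
              (Sum.inr ⟨(v,u), h'⟩)) (hJ _ hw _ hw')
      rwa [Finset.card_sdiff_of_subset (Finset.filter_subset _ _), ← hm] at this
    have htm : t ≤ m := by
      rw [hm]; exact Finset.card_le_card (Finset.filter_subset _ _)
    have hAcard : k + t ≤ A.card := by omega
    -- remove one endpoint from each bad edge
    set B : Finset V := EA.image (fun e => e.out.1) with hB
    have hBcard : B.card ≤ t := Finset.card_image_le
    have hI0card : k ≤ (A \ B).card := by
      have h1 : A.card - B.card ≤ (A \ B).card := Finset.le_card_sdiff _ _
      omega
    have hI0indep : ∀ u ∈ A \ B, ∀ v ∈ A \ B, ¬ G.Adj u v := by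
      intro u hu v hv hadj
      simp only [Finset.mem_sdiff] at hu hv
      have he : Sym2.mk u v ∈ EA := by
        simp only [hEA, Finset.mem_filter, SimpleGraph.mem_edgeFinset]
        refine ⟨hadj, ?_⟩
        intro x hx
        rcases Sym2.mem_iff.mp hx with rfl | rfl
        · exact hu.1
        · exact hv.1
      have hout : (Sym2.mk u v).out.1 ∈ B := Finset.mem_image_of_mem _ he
      have hmem : (Sym2.mk u v).out.1 ∈ Sym2.mk u v := Sym2.out_fst_mem _
      rcases Sym2.mem_iff.mp hmem with h | h
      · exact hu.2 (h ▸ hout)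
      · exact hv.2 (h ▸ hout)
    obtain ⟨I, hIsub, hIcard⟩ := Finset.exists_subset_card_eq hI0card
    exact ⟨I, fun u hu v hv => hI0indep u (hIsub hu) v (hIsub hv), hIcard⟩
end

section
/- Let G' = (V,E') be a graph and T ⊆ V such that G'[V \ T] has no edges. Then a set S ⊆ V is a T-vertex cover of G' if and only if S = R ∪ W for some minimal vertex cover R of G'[T] and some vertex cover W of G'[V \ R]. -/
/-- for a graph `G'` and `T ⊆ V` with `G'[V \ T]` edgeless, a set `S` is a
`T`-vertex cover of `G'` iff `S = R ∪ W` for a minimal vertex cover `R` of `G'[T]` and a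
vertex cover `W` of `G'[V \ R]`. -/
theorem subset_vertex_cover_decomposition {V : Type*} (G' : SimpleGraph V) (T : Set V)
    (hout : ∀ u v, u ∉ T → v ∉ T → ¬ G'.Adj u v) (S : Set V) :
    (∀ u v, G'.Adj u v → (u ∈ T ∨ v ∈ T) → (u ∈ S ∨ v ∈ S)) ↔
    (∃ R W : Set V,
      R ⊆ T ∧
      (∀ u v, u ∈ T → v ∈ T → G'.Adj u v → (u ∈ R ∨ v ∈ R)) ∧
      (∀ R' : Set V, R' ⊂ R → ¬ (∀ u v, u ∈ T → v ∈ T → G'.Adj u v → (u ∈ R' ∨ v ∈ R'))) ∧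
      W ⊆ Rᶜ ∧
      (∀ u v, u ∉ R → v ∉ R → G'.Adj u v → (u ∈ W ∨ v ∈ W)) ∧
      S = R ∪ W) := by
  constructor
  · intro hS
    -- collection of independent subsets of T
    set P : Set (Set V) := {I | I ⊆ T ∧ ∀ u ∈ I, ∀ v ∈ I, ¬ G'.Adj u v} with hP
    have hbase : T \ S ∈ P := by
      refine ⟨Set.diff_subset, ?_⟩
      intro u hu v hv hadj
      rcases hS u v hadj (Or.inl hu.1) with h | h
      · exact hu.2 h
      · exact hv.2 h
    obtain ⟨I, hIbase, hImem, hImax⟩ := zorn_subset_nonempty P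
      (fun c hcP hchain hcne => by
        refine ⟨⋃₀ c, ⟨?_, ?_⟩, fun s hs => Set.subset_sUnion_of_mem hs⟩
        · exact Set.sUnion_subset fun s hs => (hcP hs).1
        · rintro u ⟨s, hs, hus⟩ v ⟨t, ht, hvt⟩ hadj
          rcases hchain.total hs ht with h | h
          · exact (hcP ht).2 u (h hus) v hvt hadj
          · exact (hcP hs).2 u hus v (h hvt) hadj) _ hbase
    set R := T \ I with hR
    have hRS : R ⊆ S := by
      intro x hx
      by_contra hxS
      exact hx.2 (hIbase ⟨hx.1, hxS⟩)
    have hIT : I ⊆ T := hImem.1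
    have hRcov : ∀ u v, u ∈ T → v ∈ T → G'.Adj u v → (u ∈ R ∨ v ∈ R) := by
      intro u v hu hv hadj
      by_contra h
      push_neg at h
      have hu' : u ∈ I := by
        by_contra h'; exact h.1 ⟨hu, h'⟩
      have hv' : v ∈ I := by
        by_contra h'; exact h.2 ⟨hv, h'⟩
      exact hImem.2 u hu' v hv' hadj
    refine ⟨R, S \ R, Set.diff_subset, hRcov, ?_, fun x hx => hx.2, ?_, ?_⟩
    · rintro R' ⟨hsub, hne⟩ hcov
      obtain ⟨x, hxR, hxR'⟩ := Set.not_subset.mp hne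
      have hIx : insert x I ∈ P := by
        refine ⟨Set.insert_subset hxR.1 hIT, ?_⟩
        rintro u (rfl | hu) v (rfl | hv) hadj
        · exact G'.irrefl hadj
        · rcases hcov u v hxR.1 (hIT hv) hadj with h | h
          · exact hxR' h
          · exact (hsub h).2 hv
        · rcases hcov u v (hIT hu) hxR.1 hadj with h | h
          · exact (hsub h).2 hu
          · exact hxR' h
        · exact hImem.2 u hu v hv hadj
      have h2 : insert x I ⊆ I := hImax hIx (Set.subset_insert x I)
      exact hxR.2 (h2 (Set.mem_insert x I))
    · intro u v hu hv hadj
      by_cases huT : u ∈ T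
      · rcases hS u v hadj (Or.inl huT) with h | h
        · exact Or.inl ⟨h, hu⟩
        · exact Or.inr ⟨h, hv⟩
      · by_cases hvT : v ∈ T
        · rcases hS u v hadj (Or.inr hvT) with h | h
          · exact Or.inl ⟨h, hu⟩
          · exact Or.inr ⟨h, hv⟩
        · exact absurd hadj (hout u v huT hvT)
    · rw [Set.union_diff_cancel' (le_refl R) hRS]
  · rintro ⟨R, W, hRT, hRcov, _, _, hWcov, rfl⟩ u v hadj _
    by_cases hu : u ∈ R
    · exact Or.inl (Or.inl hu)
    · by_cases hv : v ∈ R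
      · exact Or.inr (Or.inl hv)
      · rcases hWcov u v hu hv hadj with h | h
        · exact Or.inl (Or.inr h)
        · exact Or.inr (Or.inr h)
end

section
/- Let G be a (P_2+P_3)-free graph, uv an edge of G, and T' the set of vertices adjacent to neither u nor v. Suppose the induced subgraph G[T'] has at least three connected components D_1, ..., D_p (p ≥ 3), each with at least two vertices. If a vertex w ∉ T' ∪ {u,v} has both a neighbour and a non-neighbour in some D_i, then for every j ∈ {1,...,p}, w is adjacent to all vertices of D_j except at most one. -/
/-- A graph is `(P₂ + P₃)`-free: it contains no five vertices inducing the disjoint union of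
an edge `ab` and a path `c — d — e`. -/
def P2P3Free {V : Type*} (G : SimpleGraph V) : Prop :=
  ¬ ∃ a b c d e : V,
      a ≠ b ∧ a ≠ c ∧ a ≠ d ∧ a ≠ e ∧ b ≠ c ∧ b ≠ d ∧ b ≠ e ∧ c ≠ d ∧ c ≠ e ∧ d ≠ e ∧
      G.Adj a b ∧ G.Adj c d ∧ G.Adj d e ∧
      ¬ G.Adj a c ∧ ¬ G.Adj a d ∧ ¬ G.Adj a e ∧
      ¬ G.Adj b c ∧ ¬ G.Adj b d ∧ ¬ G.Adj b e ∧ ¬ G.Adj c e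

/-- in a `(P₂+P₃)`-free graph with an edge `uv`, let `T'` be the vertices
adjacent to neither `u` nor `v`, and let `D 0, …, D (p-1)` (`p ≥ 3`) be connected components
of `G[T']` each with at least two vertices. If a vertex `w ∉ T' ∪ {u,v}` has both a
neighbour and a non-neighbour in some `D i`, then `w` is semi-complete to every `D j`:
adjacent to all vertices of `D j` except at most one. -/
theorem semi_complete_of_neighbour_and_nonneighbour {V : Type*} (G : SimpleGraph V)
    (hfree : P2P3Free G) (u v : V) (huv : G.Adj u v)
    (T' : Set V) (hT' : T' = {x | x ≠ u ∧ x ≠ v ∧ ¬ G.Adj x u ∧ ¬ G.Adj x v})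
    (p : ℕ) (hp : 3 ≤ p) (D : Fin p → Set V)
    (hDsub : ∀ i, D i ⊆ T')
    (hDconn : ∀ i, ∀ x, ∀ hx : x ∈ D i, ∀ y, ∀ hy : y ∈ D i,
      (G.induce T').Reachable ⟨x, hDsub i hx⟩ ⟨y, hDsub i hy⟩)
    (hDclosed : ∀ i, ∀ x ∈ D i, ∀ y ∈ T', G.Adj x y → y ∈ D i)
    (hDdisj : ∀ i j, i ≠ j → Disjoint (D i) (D j))
    (hDbig : ∀ i, ∃ x ∈ D i, ∃ y ∈ D i, x ≠ y)
    (w : V) (hwT' : w ∉ T') (hwu : w ≠ u) (hwv : w ≠ v)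
    (i : Fin p) (x y : V) (hx : x ∈ D i) (hy : y ∈ D i)
    (hwx : G.Adj w x) (hwy : ¬ G.Adj w y) :
    ∀ j : Fin p, ∃ z : V, ∀ t ∈ D j, t ≠ z → G.Adj w t := by
  -- basic facts about membership in T'
  have hTmem : ∀ t ∈ T', t ≠ u ∧ t ≠ v ∧ ¬ G.Adj t u ∧ ¬ G.Adj t v := by
    intro t ht; rw [hT'] at ht; exact ht
  -- any two distinct reachable vertices of G[T'] are adjacent (G[T'] is P₃-free)
  have key : ∀ (a b : T'), (G.induce T').Walk a b → a ≠ b → G.Adj (a : V) (b : V) := by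
    intro a b wk
    induction wk with
    | nil => intro h; exact absurd rfl h
    | @cons a c b hac pcb ih =>
      intro hab
      have hac' : G.Adj (a : V) (c : V) := hac
      by_cases hcb : c = b
      · subst hcb; exact hac'
      · have hcb' : G.Adj (c : V) (b : V) := ih hcb
        by_contra habn
        apply hfree
        have hA := hTmem a a.2
        have hC := hTmem c c.2
        have hB := hTmem b b.2
        refine ⟨u, v, a, c, b, huv.ne, hA.1.symm, hC.1.symm, hB.1.symm,
          hA.2.1.symm, hC.2.1.symm, hB.2.1.symm, hac'.ne,
          fun h => hab (Subtype.coe_injective h), hcb'.ne, huv,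
          hac', hcb', fun h => hA.2.2.1 h.symm, fun h => hC.2.2.1 h.symm,
          fun h => hB.2.2.1 h.symm, fun h => hA.2.2.2 h.symm,
          fun h => hC.2.2.2 h.symm, fun h => hB.2.2.2 h.symm, habn⟩
  have hclique : ∀ j, ∀ a ∈ D j, ∀ b ∈ D j, a ≠ b → G.Adj a b := by
    intro j a ha b hb hab
    obtain ⟨wk⟩ := hDconn j a ha b hb
    exact key _ _ wk (fun h => hab (congrArg Subtype.val h))
  have hne : ∀ k l : Fin p, k ≠ l → ∀ c ∈ D k, ∀ d ∈ D l, c ≠ d := by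
    intro k l hkl c hc d hd h
    exact Set.disjoint_left.mp (hDdisj k l hkl) hc (h ▸ hd)
  have hcross : ∀ k l : Fin p, k ≠ l → ∀ c ∈ D k, ∀ d ∈ D l, ¬ G.Adj c d := by
    intro k l hkl c hc d hd hadj
    exact Set.disjoint_left.mp (hDdisj k l hkl) hc
      (hDclosed l d hd c (hDsub k hc) hadj.symm)
  have hwD : ∀ k : Fin p, ∀ t ∈ D k, t ≠ w := by
    intro k t ht h; exact hwT' (h ▸ hDsub k ht)
  have hxy : x ≠ y := fun h => hwy (h ▸ hwx)
  intro j
  by_contra hcon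
  push_neg at hcon
  obtain ⟨a, haD, haw, hwa⟩ := hcon w
  obtain ⟨b, hbD, hba, hwb⟩ := hcon a
  have hA := hTmem a (hDsub j haD)
  have hB := hTmem b (hDsub j hbD)
  have hab : a ≠ b := Ne.symm hba
  -- two non-neighbours of w in a component different from i give P₂+P₃ with y-x-w
  have main : ∀ k : Fin p, k ≠ i → ∀ c ∈ D k, ∀ d ∈ D k, c ≠ d →
      ¬ G.Adj w c → ¬ G.Adj w d → False := by
    intro k hki c hc d hd hcd hwc hwd
    apply hfree
    exact ⟨c, d, y, x, w, hcd, hne k i hki c hc y hy, hne k i hki c hc x hx,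
      hwD k c hc, hne k i hki d hd y hy, hne k i hki d hd x hx, hwD k d hd,
      hxy.symm, hwD i y hy, hwD i x hx,
      hclique k c hc d hd hcd, hclique i y hy x hx hxy.symm, hwx.symm,
      hcross k i hki c hc y hy, hcross k i hki c hc x hx,
      fun h => hwc h.symm,
      hcross k i hki d hd y hy, hcross k i hki d hd x hx,
      fun h => hwd h.symm, fun h => hwy h.symm⟩
  rcases eq_or_ne j i with hji | hji
  · -- j = i : use a neighbour of w in some other component and u or v
    subst hji
    haveI : Nontrivial (Fin p) := Fin.nontrivial_iff_two_le.mpr (by omega)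
    obtain ⟨k, hk⟩ := exists_ne j
    obtain ⟨c, hc, e, he, hce⟩ := hDbig k
    have final : ∀ c0 ∈ D k, G.Adj w c0 → False := by
      intro c0 hc0 hwc0
      have hC := hTmem c0 (hDsub k hc0)
      have hor : G.Adj w u ∨ G.Adj w v := by
        by_contra hno
        push_neg at hno
        exact hwT' (by rw [hT']; exact ⟨hwu, hwv, hno.1, hno.2⟩)
      have hac0 := hne j k hk.symm a haD c0 hc0
      have hbc0 := hne j k hk.symm b hbD c0 hc0
      have hca := hcross j k hk.symm a haD c0 hc0
      have hcb := hcross j k hk.symm b hbD c0 hc0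
      rcases hor with hz | hz
      · exact hfree ⟨a, b, c0, w, u, hab, hac0, hwD j a haD, hA.1,
          hbc0, hwD j b hbD, hB.1, hwD k c0 hc0, hC.1, hwu,
          hclique j a haD b hbD hab, hwc0.symm, hz,
          hca, fun h => hwa h.symm, hA.2.2.1,
          hcb, fun h => hwb h.symm, hB.2.2.1, hC.2.2.1⟩
      · exact hfree ⟨a, b, c0, w, v, hab, hac0, hwD j a haD, hA.2.1,
          hbc0, hwD j b hbD, hB.2.1, hwD k c0 hc0, hC.2.1, hwv,
          hclique j a haD b hbD hab, hwc0.symm, hz,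
          hca, fun h => hwa h.symm, hA.2.2.2,
          hcb, fun h => hwb h.symm, hB.2.2.2, hC.2.2.2⟩
    by_cases hwc : G.Adj w c
    · exact final c hc hwc
    · by_cases hwe : G.Adj w e
      · exact final e he hwe
      · exact main k hk c hc e he hce hwc hwe
  · exact main j hji a haD b hbD hab hwa hwb
end

section
/- Let G be a (P_2+P_3)-free graph, uv an edge of G, and T' the set of vertices adjacent to neither u nor v. Suppose G[T'] has at least three connected components D_1, ..., D_p (p ≥ 3) of size at least two each. If a vertex w ∉ T' ∪ {u,v} has a neighbour in D_i and a neighbour in D_j for some i ≠ j, then w is adjacent to all but at most one vertex of every D_l, l ∈ {1,...,p}. -/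
/-- in a `(P₂+P₃)`-free graph with an edge `uv`, let `T'` be the vertices
adjacent to neither `u` nor `v`, and let `D 0, …, D (p-1)` (`p ≥ 3`) be connected components
of `G[T']` each with at least two vertices. If a vertex `w ∉ T' ∪ {u,v}` has a
neighbour in `D i` and a neighbour in `D j` for some `i ≠ j`, then `w` is semi-complete to every `D j`:
adjacent to all vertices of `D j` except at most one. -/
theorem semi_complete_of_neighbours_in_two_components {V : Type*} (G : SimpleGraph V)
    (hfree : P2P3Free G) (u v : V) (huv : G.Adj u v)
    (T' : Set V) (hT' : T' = {x | x ≠ u ∧ x ≠ v ∧ ¬ G.Adj x u ∧ ¬ G.Adj x v})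
    (p : ℕ) (hp : 3 ≤ p) (D : Fin p → Set V)
    (hDsub : ∀ i, D i ⊆ T')
    (hDconn : ∀ i, ∀ x, ∀ hx : x ∈ D i, ∀ y, ∀ hy : y ∈ D i,
      (G.induce T').Reachable ⟨x, hDsub i hx⟩ ⟨y, hDsub i hy⟩)
    (hDclosed : ∀ i, ∀ x ∈ D i, ∀ y ∈ T', G.Adj x y → y ∈ D i)
    (hDdisj : ∀ i j, i ≠ j → Disjoint (D i) (D j))
    (hDbig : ∀ i, ∃ x ∈ D i, ∃ y ∈ D i, x ≠ y)
    (w : V) (hwT' : w ∉ T') (hwu : w ≠ u) (hwv : w ≠ v)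
    (i j : Fin p) (hij : i ≠ j) (x y : V) (hx : x ∈ D i) (hy : y ∈ D j)
    (hwx : G.Adj w x) (hwy : G.Adj w y) :
    ∀ l : Fin p, ∃ z : V, ∀ t ∈ D l, t ≠ z → G.Adj w t := by
  -- basic facts about T'
  have hTu : ∀ a ∈ T', a ≠ u ∧ a ≠ v ∧ ¬ G.Adj a u ∧ ¬ G.Adj a v := by
    intro a ha; rw [hT'] at ha; exact ha
  have hwne : ∀ a ∈ T', a ≠ w := by
    rintro a ha rfl; exact hwT' ha
  -- G[T'] is P3-free, so reachable vertices in T' are equal or adjacent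
  have hreach : ∀ s t : T', (G.induce T').Reachable s t → s.1 = t.1 ∨ G.Adj s.1 t.1 := by
    intro s t hr
    obtain ⟨wk⟩ := hr
    induction wk with
    | nil => exact Or.inl rfl
    | @cons a c t hac wk ih =>
      have hac' : G.Adj a.1 c.1 := hac
      rcases ih with h | h
      · exact Or.inr (h ▸ hac')
      · by_cases heq : a.1 = t.1
        · exact Or.inl heq
        · by_cases hat : G.Adj a.1 t.1
          · exact Or.inr hat
          · exfalso
            obtain ⟨hau, hav, hnu, hnv⟩ := hTu a.1 a.2
            obtain ⟨hcu, hcv, hcnu, hcnv⟩ := hTu c.1 c.2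
            obtain ⟨htu, htv, htnu, htnv⟩ := hTu t.1 t.2
            exact hfree ⟨u, v, a.1, c.1, t.1, huv.ne, hau.symm, hcu.symm, htu.symm,
              hav.symm, hcv.symm, htv.symm, hac'.ne, heq, h.ne,
              huv, hac', h,
              fun hh => hnu hh.symm, fun hh => hcnu hh.symm, fun hh => htnu hh.symm,
              fun hh => hnv hh.symm, fun hh => hcnv hh.symm, fun hh => htnv hh.symm, hat⟩
  -- each component is a clique
  have hclique : ∀ l, ∀ a ∈ D l, ∀ b ∈ D l, a ≠ b → G.Adj a b := by
    intro l a ha b hb hne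
    exact (hreach ⟨a, hDsub l ha⟩ ⟨b, hDsub l hb⟩ (hDconn l a ha b hb)).resolve_left hne
  -- vertices in distinct components are distinct and non-adjacent
  have hne' : ∀ m m', m ≠ m' → ∀ a ∈ D m, ∀ b ∈ D m', a ≠ b := by
    rintro m m' hmm a ha b hb rfl
    exact Set.disjoint_left.mp (hDdisj m m' hmm) ha hb
  have hcross : ∀ m m', m ≠ m' → ∀ a ∈ D m, ∀ b ∈ D m', ¬ G.Adj a b := by
    intro m m' hmm a ha b hb hadj
    exact Set.disjoint_left.mp (hDdisj m m' hmm) (hDclosed m a ha b (hDsub m' hb) hadj) hb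
  -- key contradiction: two non-neighbours of w in one clique, neighbours in two others
  have hkey : ∀ l m m' : Fin p, l ≠ m → l ≠ m' → m ≠ m' →
      ∀ a ∈ D l, ∀ b ∈ D l, a ≠ b → ¬ G.Adj w a → ¬ G.Adj w b →
      ∀ x' ∈ D m, G.Adj w x' → ∀ y' ∈ D m', G.Adj w y' → False := by
    intro l m m' hlm hlm' hmm a ha b hb hab hna hnb x' hx' hwx' y' hy' hwy'
    exact hfree ⟨a, b, x', w, y', hab,
      hne' l m hlm a ha x' hx', hwne a (hDsub l ha), hne' l m' hlm' a ha y' hy',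
      hne' l m hlm b hb x' hx', hwne b (hDsub l hb), hne' l m' hlm' b hb y' hy',
      (hwne x' (hDsub m hx')), hne' m m' hmm x' hx' y' hy', hwy'.ne,
      hclique l a ha b hb hab, hwx'.symm, hwy',
      hcross l m hlm a ha x' hx', fun hh => hna hh.symm, hcross l m' hlm' a ha y' hy',
      hcross l m hlm b hb x' hx', fun hh => hnb hh.symm, hcross l m' hlm' b hb y' hy',
      hcross m m' hmm x' hx' y' hy'⟩
  -- a third component index exists
  obtain ⟨k, hki, hkj⟩ : ∃ k : Fin p, k ≠ i ∧ k ≠ j := by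
    by_contra h
    push_neg at h
    have hsub : (Finset.univ : Finset (Fin p)) ⊆ {i, j} := by
      intro k _
      by_cases hk : k = i
      · simp [hk]
      · simp [h k hk]
    have := Finset.card_le_card hsub
    have h2 : ({i, j} : Finset (Fin p)).card ≤ 2 :=
      (Finset.card_insert_le _ _).trans (by simp)
    simp [Finset.card_fin] at this
    omega
  -- w has a neighbour in D k
  have hA : ∃ z ∈ D k, G.Adj w z := by
    by_contra h
    push_neg at h
    obtain ⟨a, ha, b, hb, hab⟩ := hDbig k
    exact hkey k i j hki hkj hij a ha b hb hab (h a ha) (h b hb) x hx hwx y hy hwy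
  obtain ⟨x'', hx'', hwx''⟩ := hA
  -- main argument
  intro l
  by_cases hl : ∃ z ∈ D l, ¬ G.Adj w z
  · obtain ⟨z, hz, hnz⟩ := hl
    refine ⟨z, fun t ht htz => ?_⟩
    by_contra hnt
    by_cases hli : l = i
    · subst hli
      exact hkey l j k hij hki.symm hkj.symm t ht z hz htz hnt hnz
        y hy hwy x'' hx'' hwx''
    · by_cases hlj : l = j
      · subst hlj
        exact hkey l i k hij.symm hkj.symm hki.symm t ht z hz htz hnt hnz
          x hx hwx x'' hx'' hwx''
      · exact hkey l i j hli hlj hij t ht z hz htz hnt hnz x hx hwx y hy hwy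
  · push_neg at hl
    exact ⟨u, fun t ht _ => hl t ht⟩
end

section
/- Every 2-unipolar graph is weakly chordal: it contains no induced cycle C_s and no induced complement of a cycle C_s for any s ≥ 5. -/
open SimpleGraph
open Fin.CommRing

private lemma modcast (n a b : ℕ) (h : a % (n+5) = b % (n+5)) (ha : a < n+5) (hb : b < n+5) :
    a = b := by rwa [Nat.mod_eq_of_lt ha, Nat.mod_eq_of_lt hb] at h

private lemma lemA (n : ℕ) (c : Fin (n+5) → Bool)
    (h1 : ∀ i j, ¬c i → ¬c j → i ≠ j → (cycleGraph (n+5)).Adj i j)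
    (h2 : ∀ x y z, c x → c y → c z → (cycleGraph (n+5)).Adj x y →
      (cycleGraph (n+5)).Adj x z → y = z) : False := by
  have f10 : (1 : Fin (n+5)) ≠ 0 := fun h =>
    absurd (modcast n 1 0 (congrArg Fin.val h) (by omega) (by omega)) (by omega)
  have f20 : (2 : Fin (n+5)) ≠ 0 := fun h =>
    absurd (modcast n 2 0 (congrArg Fin.val h) (by omega) (by omega)) (by omega)
  have f21 : (2 : Fin (n+5)) ≠ 1 := fun h =>
    absurd (modcast n 2 1 (congrArg Fin.val h) (by omega) (by omega)) (by omega)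
  have f30 : (3 : Fin (n+5)) ≠ 0 := fun h =>
    absurd (modcast n 3 0 (congrArg Fin.val h) (by omega) (by omega)) (by omega)
  have f31 : (3 : Fin (n+5)) ≠ 1 := fun h =>
    absurd (modcast n 3 1 (congrArg Fin.val h) (by omega) (by omega)) (by omega)
  have f40 : (4 : Fin (n+5)) ≠ 0 := fun h =>
    absurd (modcast n 4 0 (congrArg Fin.val h) (by omega) (by omega)) (by omega)
  -- window: no 3 consecutive in c
  have hw : ∀ i : Fin (n+5), c (i-1) → c i → c (i+1) → False := by
    intro i hm hi hp
    have a1 : (cycleGraph (n+5)).Adj i (i-1) := by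
      rw [cycleGraph_adj]; left; show i - (i-1) = 1; ring
    have a2 : (cycleGraph (n+5)).Adj i (i+1) := by
      rw [cycleGraph_adj]; right; show (i+1) - i = 1; ring
    have he : i - 1 = i + 1 := h2 i (i-1) (i+1) hi hm hp a1 a2
    exact f20 (by linear_combination -he)
  by_cases hall : ∀ a, c a
  · exact hw 0 (hall _) (hall _) (hall _)
  push_neg at hall
  obtain ⟨a, ha⟩ := hall
  have hnc : ∀ b, ¬ c b → b ≠ a → b - a = 1 ∨ a - b = 1 := by
    intro b hb hba
    have := h1 a b ha hb (Ne.symm hba)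
    rw [cycleGraph_adj] at this
    tauto
  have key : ∀ d : Fin (n+5), d ≠ 0 → d ≠ 1 → -d ≠ 1 → c (a + d) := by
    intro d hd0 hd1 hdn
    by_contra hcd
    have hne : a + d ≠ a := fun h => hd0 (by linear_combination h)
    rcases hnc (a+d) hcd hne with h | h
    · exact hd1 (by linear_combination h)
    · exact hdn (by linear_combination h)
  have hc2 : c (a + 2) := key 2 f20 f21 (fun h => f30 (by linear_combination -h))
  have hc3 : c (a + 3) := key 3 f30 f31 (fun h => f40 (by linear_combination -h))
  have hc2' : c (a - 2) := by
    rw [show a - 2 = a + (-2) from by ring]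
    exact key (-2) (fun h => f20 (by linear_combination -h))
      (fun h => f30 (by linear_combination -h)) (fun h => f21 (by linear_combination h))
  have hc3' : c (a - 3) := by
    rw [show a - 3 = a + (-3) from by ring]
    exact key (-3) (fun h => f30 (by linear_combination -h))
      (fun h => f40 (by linear_combination -h)) (fun h => f31 (by linear_combination h))
  have hpm : c (a + 1) ∨ c (a - 1) := by
    by_contra hb
    push_neg at hb
    obtain ⟨hp, hm⟩ := hb
    have hne : (a + 1) ≠ (a - 1) := fun h => f20 (by linear_combination h)
    have := h1 (a+1) (a-1) hp hm hne
    rw [cycleGraph_adj] at this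
    rcases this with h | h
    · exact f21 (by linear_combination h)
    · exact f30 (by linear_combination -h)
  rcases hpm with hp | hm
  · refine hw (a + 2) ?_ hc2 ?_
    · rw [show a + 2 - 1 = a + 1 from by ring]; exact hp
    · rw [show a + 2 + 1 = a + 3 from by ring]; exact hc3
  · refine hw (a - 2) ?_ hc2' ?_
    · rw [show a - 2 - 1 = a - 3 from by ring]; exact hc3'
    · rw [show a - 2 + 1 = a - 1 from by ring]; exact hm

set_option maxHeartbeats 1000000 in
set_option synthInstance.maxSize 1000 in
set_option synthInstance.maxHeartbeats 400000 in
private lemma dec5 : ∀ c : Fin 5 → Bool, (∀ i, c i ∨ c (i+1)) →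
    (∀ x y z, c x → c y → c z → ((cycleGraph 5)ᶜ).Adj x y → ((cycleGraph 5)ᶜ).Adj x z →
      y = z) → False := by decide

set_option maxHeartbeats 1000000 in
set_option synthInstance.maxSize 1000 in
set_option synthInstance.maxHeartbeats 400000 in
private lemma dec6 : ∀ c : Fin 6 → Bool, (∀ i, c i ∨ c (i+1)) →
    (∀ x y z, c x → c y → c z → ((cycleGraph 6)ᶜ).Adj x y → ((cycleGraph 6)ᶜ).Adj x z →
      y = z) → False := by decide

private lemma lemB (n : ℕ) (c : Fin (n+5) → Bool)
    (h1 : ∀ i j, ¬c i → ¬c j → i ≠ j → ((cycleGraph (n+5))ᶜ).Adj i j)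
    (h2 : ∀ x y z, c x → c y → c z → ((cycleGraph (n+5))ᶜ).Adj x y →
      ((cycleGraph (n+5))ᶜ).Adj x z → y = z) : False := by
  have f10 : (1 : Fin (n+5)) ≠ 0 := fun h =>
    absurd (modcast n 1 0 (congrArg Fin.val h) (by omega) (by omega)) (by omega)
  have f20 : (2 : Fin (n+5)) ≠ 0 := fun h =>
    absurd (modcast n 2 0 (congrArg Fin.val h) (by omega) (by omega)) (by omega)
  have f21 : (2 : Fin (n+5)) ≠ 1 := fun h =>
    absurd (modcast n 2 1 (congrArg Fin.val h) (by omega) (by omega)) (by omega)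
  have f30 : (3 : Fin (n+5)) ≠ 0 := fun h =>
    absurd (modcast n 3 0 (congrArg Fin.val h) (by omega) (by omega)) (by omega)
  have f31 : (3 : Fin (n+5)) ≠ 1 := fun h =>
    absurd (modcast n 3 1 (congrArg Fin.val h) (by omega) (by omega)) (by omega)
  have f40 : (4 : Fin (n+5)) ≠ 0 := fun h =>
    absurd (modcast n 4 0 (congrArg Fin.val h) (by omega) (by omega)) (by omega)
  -- Q : c hits every consecutive pair
  have hQ : ∀ i : Fin (n+5), c i ∨ c (i+1) := by
    intro i
    by_contra hb
    push_neg at hb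
    obtain ⟨hi, hp⟩ := hb
    have hne : i ≠ i + 1 := fun h => f10 (by linear_combination -h)
    have := h1 i (i+1) hi hp hne
    rw [compl_adj, cycleGraph_adj] at this
    exact this.2 (Or.inr (by ring))
  -- complement adjacency between vertices at difference d, d ∉ {0,1,-1}
  have cadj : ∀ (x : Fin (n+5)) (d : Fin (n+5)), d ≠ 0 → d ≠ 1 → -d ≠ 1 →
      ((cycleGraph (n+5))ᶜ).Adj x (x + d) := by
    intro x d hd0 hd1 hdn
    rw [compl_adj, cycleGraph_adj]
    refine ⟨fun h => hd0 (by linear_combination -h), fun h => ?_⟩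
    rcases h with h | h
    · exact hdn (by linear_combination h)
    · exact hd1 (by linear_combination h)
  have c2 : ∀ x : Fin (n+5), ((cycleGraph (n+5))ᶜ).Adj x (x + 2) :=
    fun x => cadj x 2 f20 f21 (fun h => f30 (by linear_combination -h))
  have c3 : ∀ x : Fin (n+5), ((cycleGraph (n+5))ᶜ).Adj x (x + 3) :=
    fun x => cadj x 3 f30 f31 (fun h => f40 (by linear_combination -h))
  have c2' : ∀ x : Fin (n+5), ((cycleGraph (n+5))ᶜ).Adj x (x - 2) := by
    intro x
    rw [show x - 2 = x + (-2) from by ring]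
    exact cadj x (-2) (fun h => f20 (by linear_combination -h))
      (fun h => f30 (by linear_combination -h)) (fun h => f21 (by linear_combination h))
  have c3' : ∀ x : Fin (n+5), ((cycleGraph (n+5))ᶜ).Adj x (x - 3) := by
    intro x
    rw [show x - 3 = x + (-3) from by ring]
    exact cadj x (-3) (fun h => f30 (by linear_combination -h))
      (fun h => f40 (by linear_combination -h)) (fun h => f31 (by linear_combination h))
  -- get j with c j
  have hj : ∃ j, c j := by
    rcases hQ 0 with h | h
    exacts [⟨0, h⟩, ⟨0 + 1, h⟩]
  obtain ⟨j, hcj⟩ := hj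
  -- k ∈ {j+2, j+3} with c k, adjacent to j
  have hk : ∃ k, c k ∧ ((cycleGraph (n+5))ᶜ).Adj j k ∧ (k = j + 2 ∨ k = j + 3) := by
    rcases hQ (j + 2) with h | h
    · exact ⟨j + 2, h, c2 j, Or.inl rfl⟩
    · exact ⟨j + 3, by rwa [show j + 2 + 1 = j + 3 from by ring] at h, c3 j, Or.inr rfl⟩
  have hk' : ∃ k, c k ∧ ((cycleGraph (n+5))ᶜ).Adj j k ∧ (k = j - 3 ∨ k = j - 2) := by
    rcases hQ (j - 3) with h | h
    · exact ⟨j - 3, h, c3' j, Or.inl rfl⟩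
    · exact ⟨j - 2, by rwa [show j - 3 + 1 = j - 2 from by ring] at h, c2' j, Or.inr rfl⟩
  obtain ⟨k, hck, hak, hk⟩ := hk
  obtain ⟨k', hck', hak', hk'⟩ := hk'
  have hkk : k = k' := h2 j k k' hcj hck hck' hak hak'
  -- derive n+5 ∣ 5 or n+5 ∣ 6
  have hn : n = 0 ∨ n = 1 := by
    subst hkk
    have hdvd : (n+5) ∣ 4 ∨ (n+5) ∣ 5 ∨ (n+5) ∣ 6 := by
      rcases hk with h | h <;> rcases hk' with h' | h'
      · -- j+2 = j-3 : 5 = 0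
        right; left
        have : (5 : Fin (n+5)) = 0 := by rw [h] at h'; linear_combination h'
        exact Nat.dvd_of_mod_eq_zero (by simpa using congrArg Fin.val this)
      · -- j+2 = j-2 : 4 = 0
        left
        have : (4 : Fin (n+5)) = 0 := by rw [h] at h'; linear_combination h'
        exact Nat.dvd_of_mod_eq_zero (by simpa using congrArg Fin.val this)
      · -- j+3 = j-3 : 6 = 0
        right; right
        have : (6 : Fin (n+5)) = 0 := by rw [h] at h'; linear_combination h'
        exact Nat.dvd_of_mod_eq_zero (by simpa using congrArg Fin.val this)
      · -- j+3 = j-2 : 5 = 0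
        right; left
        have : (5 : Fin (n+5)) = 0 := by rw [h] at h'; linear_combination h'
        exact Nat.dvd_of_mod_eq_zero (by simpa using congrArg Fin.val this)
    rcases hdvd with h | h | h
    · exact absurd (Nat.le_of_dvd (by omega) h) (by omega)
    · have := Nat.le_of_dvd (by omega) h; omega
    · have := Nat.le_of_dvd (by omega) h; omega
  rcases hn with rfl | rfl
  · exact dec5 c hQ h2
  · exact dec6 c hQ h2

/-- A graph is 2-unipolar if its vertex set partitions into `V₁`, `V₂` where `V₁` induces a
complete graph and `V₂` induces a disjoint union of complete graphs each of size at most 2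
(equivalently, every vertex of `V₂` has at most one neighbour inside `V₂`). -/
def TwoUnipolar {V : Type*} (G : SimpleGraph V) : Prop :=
  ∃ V₁ V₂ : Set V, V₁ ∪ V₂ = Set.univ ∧ Disjoint V₁ V₂ ∧
    (∀ x ∈ V₁, ∀ y ∈ V₁, x ≠ y → G.Adj x y) ∧
    (∀ x ∈ V₂, ∀ y ∈ V₂, ∀ z ∈ V₂, G.Adj x y → G.Adj x z → y = z)

/-- every 2-unipolar graph is weakly chordal: for every `s ≥ 5` it has no
induced cycle `C_s` and no induced complement of `C_s`. -/
theorem twoUnipolar_weakly_chordal {V : Type*} (G : SimpleGraph V) (h : TwoUnipolar G) :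
    ∀ s : ℕ, 5 ≤ s →
      IsEmpty (SimpleGraph.cycleGraph s ↪g G) ∧
      IsEmpty ((SimpleGraph.cycleGraph s)ᶜ ↪g G) := by
  classical
  obtain ⟨V₁, V₂, hunion, hdisj, hclique, hmatch⟩ := h
  intro s hs
  obtain ⟨n, rfl⟩ : ∃ n, s = n + 5 := ⟨s - 5, by omega⟩
  have hmem : ∀ v : V, v ∉ V₂ → v ∈ V₁ := by
    intro v hv
    have : v ∈ V₁ ∪ V₂ := hunion ▸ Set.mem_univ v
    rcases this with h | h
    · exact h
    · exact absurd h hv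
  constructor
  · constructor
    intro f
    apply lemA n (fun i => decide (f i ∈ V₂))
    · intro i j hi hj hij
      simp only [decide_eq_true_eq] at hi hj
      exact f.map_adj_iff.mp
        (hclique _ (hmem _ hi) _ (hmem _ hj) (fun h => hij (f.injective h)))
    · intro x y z hx hy hz hxy hxz
      simp only [decide_eq_true_eq] at hx hy hz
      exact f.injective
        (hmatch _ hx _ hy _ hz (f.map_adj_iff.mpr hxy) (f.map_adj_iff.mpr hxz))
  · constructor
    intro f
    apply lemB n (fun i => decide (f i ∈ V₂))
    · intro i j hi hj hij
      simp only [decide_eq_true_eq] at hi hj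
      exact f.map_adj_iff.mp
        (hclique _ (hmem _ hi) _ (hmem _ hj) (fun h => hij (f.injective h)))
    · intro x y z hx hy hz hxy hxz
      simp only [decide_eq_true_eq] at hx hy hz
      exact f.injective
        (hmatch _ hx _ hy _ hz (f.map_adj_iff.mpr hxy) (f.map_adj_iff.mpr hxz))
end

section
/- Let G be a graph, T ⊆ V(G), and A ⊆ V(G). Let X, W ⊆ A be T-independent sets such that X ∩ T and W ∩ T are 1-neighbour equivalent with respect to A, and X \ T and W \ T are 1-neighbour equivalent with respect to A. Then for every Y ⊆ V(G) \ A, the set X ∪ Y is a T-independent set if and only if W ∪ Y is a T-independent set. -/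
/-- A set `Z` is a `T`-independent set of `G` if `G[Z]` has no edge incident to `T ∩ Z`. -/
def TIndep {V : Type*} (G : SimpleGraph V) (T Z : Set V) : Prop :=
  ∀ x ∈ Z, ∀ y ∈ Z, G.Adj x y → x ∉ T ∧ y ∉ T

/-- Sets `P, Q ⊆ A` are 1-neighbour equivalent w.r.t. `A`: every vertex outside `A` has a
neighbour in `P` iff it has one in `Q`. -/
def OneNeighbourEquiv {V : Type*} (G : SimpleGraph V) (A P Q : Set V) : Prop :=
  ∀ v ∉ A, ((∃ p ∈ P, G.Adj v p) ↔ (∃ q ∈ Q, G.Adj v q))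

lemma tIndep_aux {V : Type*} (G : SimpleGraph V) (T A X W Y : Set V)
    (hWind : TIndep G T W) (hY : Y ⊆ Aᶜ)
    (h1 : OneNeighbourEquiv G A (X ∩ T) (W ∩ T))
    (h2 : OneNeighbourEquiv G A (X \ T) (W \ T))
    (hXY : TIndep G T (X ∪ Y)) : TIndep G T (W ∪ Y) := by
  have key : ∀ x ∈ W, ∀ y ∈ Y, G.Adj x y → x ∉ T ∧ y ∉ T := by
    intro x hxW y hyY hadj
    have hyA : y ∉ A := hY hyY
    constructor
    · intro hxT
      obtain ⟨p, hp, hadj'⟩ := (h1 y hyA).2 ⟨x, ⟨hxW, hxT⟩, hadj.symm⟩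
      exact (hXY p (Or.inl hp.1) y (Or.inr hyY) hadj'.symm).1 hp.2
    · intro hyT
      by_cases hxT : x ∈ T
      · obtain ⟨p, hp, hadj'⟩ := (h1 y hyA).2 ⟨x, ⟨hxW, hxT⟩, hadj.symm⟩
        exact (hXY p (Or.inl hp.1) y (Or.inr hyY) hadj'.symm).1 hp.2
      · obtain ⟨p, hp, hadj'⟩ := (h2 y hyA).2 ⟨x, ⟨hxW, hxT⟩, hadj.symm⟩
        exact (hXY p (Or.inl hp.1) y (Or.inr hyY) hadj'.symm).2 hyT
  intro x hx y hy hadj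
  rcases hx with hxW | hxY
  · rcases hy with hyW | hyY
    · exact hWind x hxW y hyW hadj
    · exact key x hxW y hyY hadj
  · rcases hy with hyW | hyY
    · exact (key y hyW x hxY hadj.symm).symm
    · exact hXY x (Or.inr hxY) y (Or.inr hyY) hadj

/-- if `X, W ⊆ A` are `T`-independent sets with `X ∩ T ≡¹_A W ∩ T` and
`X \ T ≡¹_A W \ T`, then for every `Y ⊆ V \ A`, `X ∪ Y` is a `T`-independent set iff
`W ∪ Y` is. -/
theorem tIndep_union_iff_of_oneNeighbourEquiv {V : Type*} (G : SimpleGraph V)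
    (T A X W : Set V) (hX : X ⊆ A) (hW : W ⊆ A)
    (hXind : TIndep G T X) (hWind : TIndep G T W)
    (h1 : OneNeighbourEquiv G A (X ∩ T) (W ∩ T))
    (h2 : OneNeighbourEquiv G A (X \ T) (W \ T)) :
    ∀ Y : Set V, Y ⊆ Aᶜ → (TIndep G T (X ∪ Y) ↔ TIndep G T (W ∪ Y)) := by
  intro Y hY
  exact ⟨tIndep_aux G T A X W Y hWind hY h1 h2,
    tIndep_aux G T A W X Y hXind hY (fun v hv => (h1 v hv).symm)
      (fun v hv => (h2 v hv).symm)⟩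
end

section
/- Let G be a graph, T ⊆ V(G), and let A, B ⊆ V(G) be disjoint with A ∪ B = C. Suppose 𝒜 ⊆ 2^A represents 2^A (i.e., best(𝒜,Y) = best(2^A, Y) for all Y ⊆ V(G)\A) and ℬ ⊆ 2^B represents 2^B. Then 𝒜 ⊗ ℬ := { X ∪ W : X ∈ 𝒜, W ∈ ℬ } represents 2^C, i.e., best(𝒜 ⊗ ℬ, Y) = best(2^C, Y) for all Y ⊆ V(G) \ C. -/
/-- `best 𝒜 Y` is the maximum weight `ω(X)` over `X ∈ 𝒜` with `X ∪ Y` a `T`-independent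
set, valued in `EReal` so that the empty maximum is `-∞`. -/
noncomputable def best {V : Type*} [DecidableEq V] (G : SimpleGraph V) (T : Set V)
    (ω : V → ℝ) (𝒜 : Set (Finset V)) (Y : Finset V) : EReal :=
  sSup ((fun X : Finset V => ((∑ x ∈ X, ω x : ℝ) : EReal)) ''
    {X | X ∈ 𝒜 ∧ TIndep G T (↑(X ∪ Y))})

lemma tindep_congr {V : Type*} (G : SimpleGraph V) (T : Set V) {Z Z' : Set V}
    (h : Z = Z') : TIndep G T Z ↔ TIndep G T Z' := by rw [h]

/-- if `A` and `B` are disjoint, `𝒜 ⊆ 2^A` represents `2^A` and `ℬ ⊆ 2^B`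
represents `2^B`, then `𝒜 ⊗ ℬ = {X ∪ W : X ∈ 𝒜, W ∈ ℬ}` represents `2^C` for
`C = A ∪ B`. -/
theorem tensor_represents {V : Type*} [DecidableEq V] (G : SimpleGraph V) (T : Set V)
    (ω : V → ℝ) (A B C : Finset V) (hdisj : Disjoint A B) (hC : C = A ∪ B)
    (𝒜 ℬ : Set (Finset V))
    (h𝒜sub : ∀ X ∈ 𝒜, X ⊆ A) (hℬsub : ∀ W ∈ ℬ, W ⊆ B)
    (h𝒜rep : ∀ Y : Finset V, ↑Y ⊆ (↑A : Set V)ᶜ →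
      best G T ω 𝒜 Y = best G T ω {X | X ⊆ A} Y)
    (hℬrep : ∀ Y : Finset V, ↑Y ⊆ (↑B : Set V)ᶜ →
      best G T ω ℬ Y = best G T ω {W | W ⊆ B} Y) :
    ∀ Y : Finset V, ↑Y ⊆ (↑C : Set V)ᶜ →
      best G T ω {Z | ∃ X ∈ 𝒜, ∃ W ∈ ℬ, Z = X ∪ W} Y = best G T ω {Z | Z ⊆ C} Y := by
  intro Y hY
  apply le_antisymm
  · -- easy direction: tensor elements are subsets of C
    apply sSup_le_sSup
    apply Set.image_mono
    rintro Z ⟨⟨X, hX, W, hW, rfl⟩, hind⟩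
    refine ⟨?_, hind⟩
    simp only [Set.mem_setOf_eq, hC]
    exact Finset.union_subset_union (h𝒜sub X hX) (hℬsub W hW)
  · set M := best G T ω {Z | ∃ X ∈ 𝒜, ∃ W ∈ ℬ, Z = X ∪ W} Y with hM
    apply sSup_le
    rintro e ⟨Z, ⟨hZC, hZind⟩, rfl⟩
    simp only [Set.mem_setOf_eq] at hZC
    set ZA := Z ∩ A with hZA
    set ZB := Z ∩ B with hZB
    have hZsplit : ZA ∪ ZB = Z := by
      rw [hZA, hZB, ← Finset.inter_union_distrib_left, ← hC,
        Finset.inter_eq_left.mpr hZC]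
    have hZAA : ZA ⊆ A := Finset.inter_subset_right
    have hZBB : ZB ⊆ B := Finset.inter_subset_right
    have hZAZBdisj : Disjoint ZA ZB := hdisj.mono hZAA hZBB
    have hYA : (↑Y : Set V) ⊆ (↑A : Set V)ᶜ := by
      intro y hy
      have := hY hy
      simp only [hC, Finset.coe_union, Set.compl_union] at this
      exact this.1
    have hYB : (↑Y : Set V) ⊆ (↑B : Set V)ᶜ := by
      intro y hy
      have := hY hy
      simp only [hC, Finset.coe_union, Set.compl_union] at this
      exact this.2
    -- first step: ω(ZA) ≤ best(𝒜, ZB ∪ Y)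
    have hZBY : (↑(ZB ∪ Y) : Set V) ⊆ (↑A : Set V)ᶜ := by
      intro y hy
      simp only [Finset.coe_union, Set.mem_union] at hy
      rcases hy with hy | hy
      · exact fun hA => Finset.disjoint_left.mp hdisj (Finset.mem_coe.mp hA) (hZBB hy)
      · exact hYA hy
    have step1 : ((∑ x ∈ ZA, ω x : ℝ) : EReal) ≤ best G T ω 𝒜 (ZB ∪ Y) := by
      rw [h𝒜rep _ hZBY]
      apply le_sSup
      refine ⟨ZA, ⟨hZAA, ?_⟩, rfl⟩
      have : ZA ∪ (ZB ∪ Y) = Z ∪ Y := by rw [← Finset.union_assoc, hZsplit]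
      rw [this]
      exact hZind
    -- key claim: ω(X) + ω(ZB) ≤ M for every eligible X
    have key : ∀ X, X ∈ 𝒜 → TIndep G T (↑(X ∪ (ZB ∪ Y))) →
        ((∑ x ∈ X, ω x : ℝ) : EReal) + ((∑ x ∈ ZB, ω x : ℝ) : EReal) ≤ M := by
      intro X hX hXind
      have hXA : X ⊆ A := h𝒜sub X hX
      have hXY : (↑(X ∪ Y) : Set V) ⊆ (↑B : Set V)ᶜ := by
        intro y hy
        simp only [Finset.coe_union, Set.mem_union] at hy
        rcases hy with hy | hy
        · exact fun hB => Finset.disjoint_left.mp hdisj (hXA hy) (Finset.mem_coe.mp hB)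
        · exact hYB hy
      have step2 : ((∑ x ∈ ZB, ω x : ℝ) : EReal) ≤ best G T ω ℬ (X ∪ Y) := by
        rw [hℬrep _ hXY]
        apply le_sSup
        refine ⟨ZB, ⟨hZBB, ?_⟩, rfl⟩
        have : ZB ∪ (X ∪ Y) = X ∪ (ZB ∪ Y) := by
          ext x; simp only [Finset.mem_union]; tauto
        rw [this]
        exact hXind
      -- every eligible W gives ω(X) + ω(W) ≤ M
      have step3 : best G T ω ℬ (X ∪ Y) ≤ M - ((∑ x ∈ X, ω x : ℝ) : EReal) := by
        apply sSup_le
        rintro e ⟨W, ⟨hW, hWind⟩, rfl⟩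
        rw [EReal.le_sub_iff_add_le (Or.inl (EReal.coe_ne_bot _))
          (Or.inl (EReal.coe_ne_top _))]
        have hXW : Disjoint X W := hdisj.mono hXA (hℬsub W hW)
        have : ((∑ x ∈ W, ω x : ℝ) : EReal) + ((∑ x ∈ X, ω x : ℝ) : EReal)
            = ((∑ x ∈ X ∪ W, ω x : ℝ) : EReal) := by
          rw [Finset.sum_union hXW, EReal.coe_add, add_comm]
        rw [this, hM]
        apply le_sSup
        refine ⟨X ∪ W, ⟨⟨X, hX, W, hW, rfl⟩, ?_⟩, rfl⟩
        have : X ∪ W ∪ Y = W ∪ (X ∪ Y) := by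
          ext x; simp only [Finset.mem_union]; tauto
        rw [this]
        exact hWind
      have := le_trans step2 step3
      rw [EReal.le_sub_iff_add_le (Or.inl (EReal.coe_ne_bot _))
        (Or.inl (EReal.coe_ne_top _))] at this
      calc ((∑ x ∈ X, ω x : ℝ) : EReal) + ((∑ x ∈ ZB, ω x : ℝ) : EReal)
          = ((∑ x ∈ ZB, ω x : ℝ) : EReal) + ((∑ x ∈ X, ω x : ℝ) : EReal) := add_comm _ _
        _ ≤ M := this
    -- combine: ω(ZA) ≤ sup ≤ M - ω(ZB)
    have step4 : best G T ω 𝒜 (ZB ∪ Y) ≤ M - ((∑ x ∈ ZB, ω x : ℝ) : EReal) := by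
      apply sSup_le
      rintro e ⟨X, ⟨hX, hXind⟩, rfl⟩
      rw [EReal.le_sub_iff_add_le (Or.inl (EReal.coe_ne_bot _))
        (Or.inl (EReal.coe_ne_top _))]
      exact key X hX hXind
    have := le_trans step1 step4
    rw [EReal.le_sub_iff_add_le (Or.inl (EReal.coe_ne_bot _))
      (Or.inl (EReal.coe_ne_top _))] at this
    calc ((∑ x ∈ Z, ω x : ℝ) : EReal)
        = ((∑ x ∈ ZA, ω x : ℝ) : EReal) + ((∑ x ∈ ZB, ω x : ℝ) : EReal) := by
          rw [← EReal.coe_add, ← Finset.sum_union hZAZBdisj, hZsplit]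
      _ ≤ M := this
end
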